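/- On the polynomial ring ℚ(v)[x_1,…,x_n] the operators ∇_i satisfy: ∇_i² = −(v + v^{−1})∇_i for all 1 ≤ i ≤ n−1; ∇_i ∇_j = ∇_j ∇_i whenever |i−j| ≥ 2; and ∇_i ∇_{i+1} ∇_i − ∇_{i+1} ∇_i ∇_{i+1} = ∇_i − ∇_{i+1} for 1 ≤ i ≤ n−2. Equivalently, the operators T_i := ∇_i + v satisfy the Hecke algebra relations (T_i − v)(T_i + v^{−1}) = 0 together with the braid and commutation relations. -/

import Mathlib

open scoped Classical

set_option maxHeartbeats 1000000
set_option synthInstance.maxHeartbeats 1000000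

noncomputable section

/-- The field ℚ(v) of rational functions. -/
abbrev F : Type := RatFunc ℚ

/-- The variable v. -/
def v : F := RatFunc.X

/-- The quantum integer [r] = (v^r - v^{-r})/(v - v^{-1}). -/
def qint (r : ℕ) : F := (v ^ r - v⁻¹ ^ r) / (v - v⁻¹)


/-- The variable x_p (1-based position p) in ℚ(v)[x_1,…,x_n]. -/
def xv (n p : ℕ) : MvPolynomial (Fin n) F :=
  if h : 1 ≤ p ∧ p ≤ n then MvPolynomial.X ⟨p - 1, by omega⟩ else 0

/-- Exchange of the variables x_i and x_{i+1} (1-based, 1 ≤ i ≤ n−1). -/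
def swapf (n i : ℕ) (f : MvPolynomial (Fin n) F) : MvPolynomial (Fin n) F :=
  if h : 1 ≤ i ∧ i < n then
    MvPolynomial.rename (Equiv.swap ⟨i - 1, by omega⟩ ⟨i, h.2⟩) f
  else f

/-- The divided difference ∂_i f = (f − s_i f)/(x_i − x_{i+1}). -/
def ddiff (n i : ℕ) (f : MvPolynomial (Fin n) F) : MvPolynomial (Fin n) F :=
  if h : ∃ g, f - swapf n i f = (xv n i - xv n (i + 1)) * g then h.choose else 0

/-- The operator ∇_i f = (v x_{i+1} − v⁻¹ x_i)·∂_i f. -/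
def nabla (n i : ℕ) (f : MvPolynomial (Fin n) F) : MvPolynomial (Fin n) F :=
  (MvPolynomial.C v * xv n (i + 1) - MvPolynomial.C v⁻¹ * xv n i) * ddiff n i f



open MvPolynomial

namespace Aux

variable {n : ℕ}

lemma dvd_sub_aeval (a b : Fin n) (g : MvPolynomial (Fin n) F) :
    (X a - X b : MvPolynomial (Fin n) F) ∣
      g - aeval (fun j => if j = b then X a else X j) g := by
  induction g using MvPolynomial.induction_on with
  | C r => simp
  | add p q hp hq =>
      have : p + q - aeval (fun j => if j = b then X a else X j) (p + q) =
          (p - aeval (fun j => if j = b then X a else X j) p) +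
          (q - aeval (fun j => if j = b then X a else X j) q) := by
        rw [map_add]; ring
      rw [this]; exact dvd_add hp hq
  | mul_X p j hp =>
      have : p * X j - aeval (fun j => if j = b then X a else X j) (p * X j) =
          (p - aeval (fun j => if j = b then X a else X j) p) * X j +
          aeval (fun j => if j = b then X a else X j) p *
            (X j - (if j = b then X a else X j)) := by
        rw [map_mul, aeval_X]; ring
      rw [this]
      apply dvd_add (Dvd.dvd.mul_right hp _)
      apply Dvd.dvd.mul_left
      by_cases hj : j = b
      · subst hj
        have : (if j = j then (X a : MvPolynomial (Fin n) F) else X j) = X a := if_pos rfl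
        rw [this]; exact ⟨-1, by ring⟩
      · simp [hj]

lemma key_dvd (a b : Fin n) (f : MvPolynomial (Fin n) F) :
    (X a - X b : MvPolynomial (Fin n) F) ∣ f - rename (Equiv.swap a b) f := by
  have h2 : (aeval (fun j => if j = b then X a else X j) : MvPolynomial (Fin n) F →ₐ[F] MvPolynomial (Fin n) F) (rename (Equiv.swap a b) f)
      = aeval (fun j => if j = b then X a else X j) f := by
    rw [aeval_rename]
    have hfun : ((fun j => if j = b then (X a : MvPolynomial (Fin n) F) else X j) ∘ (Equiv.swap a b)) = (fun j => if j = b then X a else X j) := by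
      funext j
      simp only [Function.comp_apply]
      by_cases hja : j = a
      · subst hja
        rw [Equiv.swap_apply_left]
        simp
      · by_cases hjb : j = b
        · subst hjb
          rw [Equiv.swap_apply_right]
          simp
        · rw [Equiv.swap_apply_of_ne_of_ne hja hjb]
    rw [hfun]
  have e : f - rename (Equiv.swap a b) f =
      (f - aeval (fun j => if j = b then X a else X j) f) -
      (rename (Equiv.swap a b) f - aeval (fun j => if j = b then X a else X j) (rename (Equiv.swap a b) f)) := by
    rw [h2]; ring
  rw [e]
  exact dvd_sub (dvd_sub_aeval a b f) (dvd_sub_aeval a b _)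

end Aux

namespace Aux2
open Aux

variable {n : ℕ}

lemma xv_eq {p : ℕ} (h1 : 1 ≤ p) (h2 : p ≤ n) : xv n p = X ⟨p-1, by omega⟩ :=
  dif_pos ⟨h1, h2⟩

lemma xv_invalid {p : ℕ} (h : ¬(1 ≤ p ∧ p ≤ n)) : xv n p = 0 := dif_neg h

lemma swapf_eq {i : ℕ} (h1 : 1 ≤ i) (h2 : i < n) (f : MvPolynomial (Fin n) F) :
    swapf n i f = rename (Equiv.swap ⟨i-1, by omega⟩ ⟨i, h2⟩) f := dif_pos ⟨h1, h2⟩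

lemma swapf_add {i : ℕ} (f g : MvPolynomial (Fin n) F) :
    swapf n i (f + g) = swapf n i f + swapf n i g := by
  unfold swapf; split_ifs with h
  · exact map_add _ _ _
  · rfl

lemma swapf_mul {i : ℕ} (f g : MvPolynomial (Fin n) F) :
    swapf n i (f * g) = swapf n i f * swapf n i g := by
  unfold swapf; split_ifs with h
  · exact map_mul _ _ _
  · rfl

lemma swapf_sub {i : ℕ} (f g : MvPolynomial (Fin n) F) :
    swapf n i (f - g) = swapf n i f - swapf n i g := by
  unfold swapf; split_ifs with h
  · exact map_sub _ _ _
  · rfl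

lemma swapf_neg {i : ℕ} (f : MvPolynomial (Fin n) F) :
    swapf n i (-f) = -swapf n i f := by
  unfold swapf; split_ifs with h
  · exact map_neg _ _
  · rfl

lemma swapf_zero {i : ℕ} : swapf n i (0 : MvPolynomial (Fin n) F) = 0 := by
  unfold swapf; split_ifs with h
  · exact map_zero _
  · rfl

lemma swapf_one {i : ℕ} : swapf n i (1 : MvPolynomial (Fin n) F) = 1 := by
  unfold swapf; split_ifs with h
  · exact map_one _
  · rfl

lemma swapf_C {i : ℕ} (c : F) : swapf n i (C c : MvPolynomial (Fin n) F) = C c := by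
  unfold swapf; split_ifs with h
  · exact rename_C _ _
  · rfl

lemma swapf_swapf {i : ℕ} (f : MvPolynomial (Fin n) F) :
    swapf n i (swapf n i f) = f := by
  unfold swapf; split_ifs with h
  · rw [rename_rename]
    have : (Equiv.swap (⟨i-1, by omega⟩ : Fin n) ⟨i, h.2⟩) ∘ (Equiv.swap ⟨i-1, by omega⟩ ⟨i, h.2⟩) = id := by
      funext x; exact Equiv.swap_apply_self _ _ _
    rw [this, rename_id, AlgHom.id_apply]
  · rfl

lemma swapf_xv_left {i : ℕ} (h1 : 1 ≤ i) (h2 : i < n) :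
    swapf n i (xv n i) = xv n (i+1) := by
  rw [swapf_eq h1 h2, xv_eq h1 (le_of_lt h2), xv_eq (by omega : 1 ≤ i+1) h2]
  simp only [Nat.add_sub_cancel, rename_X, Equiv.swap_apply_left]

lemma swapf_xv_right {i : ℕ} (h1 : 1 ≤ i) (h2 : i < n) :
    swapf n i (xv n (i+1)) = xv n i := by
  rw [swapf_eq h1 h2, xv_eq (by omega : 1 ≤ i+1) h2, xv_eq h1 (le_of_lt h2)]
  simp only [Nat.add_sub_cancel, rename_X, Equiv.swap_apply_right]

lemma swapf_xv_other {i k : ℕ} (h1 : 1 ≤ i) (h2 : i < n) (hk1 : k ≠ i) (hk2 : k ≠ i + 1) :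
    swapf n i (xv n k) = xv n k := by
  by_cases hk : 1 ≤ k ∧ k ≤ n
  · rw [swapf_eq h1 h2, xv_eq hk.1 hk.2, rename_X,
      Equiv.swap_apply_of_ne_of_ne (by simp [Fin.ext_iff]; omega) (by simp [Fin.ext_iff]; omega)]
  · rw [xv_invalid hk, swapf_eq h1 h2, map_zero]

lemma xv_sub_ne {i : ℕ} (h1 : 1 ≤ i) (h2 : i < n) :
    (xv n i - xv n (i+1) : MvPolynomial (Fin n) F) ≠ 0 := by
  rw [xv_eq h1 (le_of_lt h2), xv_eq (by omega : 1 ≤ i+1) h2, sub_ne_zero]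
  exact fun h => by
    have := MvPolynomial.X_injective h
    simp [Fin.ext_iff] at this
    omega

lemma ddiff_spec {i : ℕ} (h1 : 1 ≤ i) (h2 : i < n) (f : MvPolynomial (Fin n) F) :
    (xv n i - xv n (i+1)) * ddiff n i f = f - swapf n i f := by
  have hex : ∃ g, f - swapf n i f = (xv n i - xv n (i + 1)) * g := by
    rw [swapf_eq h1 h2, xv_eq h1 (le_of_lt h2), xv_eq (by omega : 1 ≤ i+1) h2]
    exact key_dvd _ _ f
  rw [ddiff, dif_pos hex]
  exact hex.choose_spec.symm

lemma ddiff_unique {i : ℕ} (h1 : 1 ≤ i) (h2 : i < n) {f g : MvPolynomial (Fin n) F}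
    (hg : (xv n i - xv n (i+1)) * g = f - swapf n i f) : ddiff n i f = g :=
  mul_left_cancel₀ (xv_sub_ne h1 h2) ((ddiff_spec h1 h2 f).trans hg.symm)

end Aux2

namespace Aux3
open Aux Aux2

variable {n : ℕ}

lemma swapf_ddiff_self {i : ℕ} (h1 : 1 ≤ i) (h2 : i < n) (f : MvPolynomial (Fin n) F) :
    swapf n i (ddiff n i f) = ddiff n i f := by
  have hs := ddiff_spec h1 h2 f
  have h' := congrArg (swapf n i) hs
  rw [swapf_mul, swapf_sub, swapf_sub, swapf_xv_left h1 h2, swapf_xv_right h1 h2,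
    swapf_swapf] at h'
  -- h' : (xv n (i+1) - xv n i) * swapf n i (ddiff n i f) = swapf n i f - f
  apply mul_left_cancel₀ (xv_sub_ne h1 h2)
  rw [hs]
  have : (xv n i - xv n (i+1)) * swapf n i (ddiff n i f)
      = -((xv n (i+1) - xv n i) * swapf n i (ddiff n i f)) := by ring
  rw [this, h']; ring

lemma ddiff_of_invariant {i : ℕ} (h1 : 1 ≤ i) (h2 : i < n) {f : MvPolynomial (Fin n) F}
    (hf : swapf n i f = f) : ddiff n i f = 0 :=
  ddiff_unique h1 h2 (by rw [hf]; ring)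

lemma ddiff_C {i : ℕ} (h1 : 1 ≤ i) (h2 : i < n) (c : F) :
    ddiff n i (C c : MvPolynomial (Fin n) F) = 0 :=
  ddiff_of_invariant h1 h2 (swapf_C c)

lemma ddiff_one {i : ℕ} (h1 : 1 ≤ i) (h2 : i < n) :
    ddiff n i (1 : MvPolynomial (Fin n) F) = 0 :=
  ddiff_of_invariant h1 h2 swapf_one

lemma ddiff_mul {i : ℕ} (h1 : 1 ≤ i) (h2 : i < n) (f g : MvPolynomial (Fin n) F) :
    ddiff n i (f * g) = ddiff n i f * g + swapf n i f * ddiff n i g := by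
  apply ddiff_unique h1 h2
  have hf := ddiff_spec h1 h2 f
  have hg := ddiff_spec h1 h2 g
  rw [swapf_mul]
  calc (xv n i - xv n (i+1)) * (ddiff n i f * g + swapf n i f * ddiff n i g)
      = ((xv n i - xv n (i+1)) * ddiff n i f) * g
        + swapf n i f * ((xv n i - xv n (i+1)) * ddiff n i g) := by ring
    _ = (f - swapf n i f) * g + swapf n i f * (g - swapf n i g) := by rw [hf, hg]
    _ = f * g - swapf n i f * swapf n i g := by ring

lemma ddiff_add {i : ℕ} (h1 : 1 ≤ i) (h2 : i < n) (f g : MvPolynomial (Fin n) F) :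
    ddiff n i (f + g) = ddiff n i f + ddiff n i g := by
  apply ddiff_unique h1 h2
  have hf := ddiff_spec h1 h2 f
  have hg := ddiff_spec h1 h2 g
  rw [swapf_add, mul_add, hf, hg]; ring

lemma ddiff_sub {i : ℕ} (h1 : 1 ≤ i) (h2 : i < n) (f g : MvPolynomial (Fin n) F) :
    ddiff n i (f - g) = ddiff n i f - ddiff n i g := by
  apply ddiff_unique h1 h2
  have hf := ddiff_spec h1 h2 f
  have hg := ddiff_spec h1 h2 g
  rw [swapf_sub, mul_sub, hf, hg]; ring

lemma ddiff_Cmul {i : ℕ} (h1 : 1 ≤ i) (h2 : i < n) (c : F) (f : MvPolynomial (Fin n) F) :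
    ddiff n i (C c * f) = C c * ddiff n i f := by
  rw [ddiff_mul h1 h2, ddiff_C h1 h2, swapf_C]; ring

lemma ddiff_ddiff {i : ℕ} (h1 : 1 ≤ i) (h2 : i < n) (f : MvPolynomial (Fin n) F) :
    ddiff n i (ddiff n i f) = 0 :=
  ddiff_of_invariant h1 h2 (swapf_ddiff_self h1 h2 f)

lemma ddiff_xv_self {i : ℕ} (h1 : 1 ≤ i) (h2 : i < n) :
    ddiff n i (xv n i) = 1 :=
  ddiff_unique h1 h2 (by rw [swapf_xv_left h1 h2]; ring)

lemma ddiff_xv_succ {i : ℕ} (h1 : 1 ≤ i) (h2 : i < n) :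
    ddiff n i (xv n (i+1)) = -1 :=
  ddiff_unique h1 h2 (by rw [swapf_xv_right h1 h2]; ring)

lemma ddiff_xv_other {i k : ℕ} (h1 : 1 ≤ i) (h2 : i < n) (hk1 : k ≠ i) (hk2 : k ≠ i + 1) :
    ddiff n i (xv n k) = 0 :=
  ddiff_of_invariant h1 h2 (swapf_xv_other h1 h2 hk1 hk2)

lemma xv_sub_ne2 {k l : ℕ} (hk : 1 ≤ k) (hl : l ≤ n) (hkl : k < l) :
    (xv n k - xv n l : MvPolynomial (Fin n) F) ≠ 0 := by
  rw [xv_eq hk (by omega), xv_eq (by omega : 1 ≤ l) hl, sub_ne_zero]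
  exact fun h => by
    have := MvPolynomial.X_injective h
    simp [Fin.ext_iff] at this
    omega

end Aux3

namespace Aux4
open Aux Aux2 Aux3

variable {n : ℕ}

lemma swap_comm_fun {α : Type*} [DecidableEq α] {a b c d : α}
    (h1 : a ≠ c) (h2 : a ≠ d) (h3 : b ≠ c) (h4 : b ≠ d) :
    (Equiv.swap a b : α → α) ∘ (Equiv.swap c d) = (Equiv.swap c d : α → α) ∘ (Equiv.swap a b) := by
  funext x
  simp only [Function.comp_apply, Equiv.swap_apply_def]
  split_ifs <;> simp_all

lemma swapf_comm_far {i j : ℕ} (hi1 : 1 ≤ i) (hi2 : i < n) (hj1 : 1 ≤ j) (hj2 : j < n)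
    (hij : i + 2 ≤ j ∨ j + 2 ≤ i) (f : MvPolynomial (Fin n) F) :
    swapf n i (swapf n j f) = swapf n j (swapf n i f) := by
  rw [swapf_eq hi1 hi2, swapf_eq hj1 hj2, swapf_eq hj1 hj2, swapf_eq hi1 hi2,
    rename_rename, rename_rename]
  rw [swap_comm_fun (a := (⟨i-1, by omega⟩ : Fin n)) (b := ⟨i, hi2⟩)
    (c := ⟨j-1, by omega⟩) (d := ⟨j, hj2⟩)
    (by simp [Fin.ext_iff]; omega) (by simp [Fin.ext_iff]; omega)
    (by simp [Fin.ext_iff]; omega) (by simp [Fin.ext_iff]; omega)]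

lemma swapf_ddiff_far {i j : ℕ} (hi1 : 1 ≤ i) (hi2 : i < n) (hj1 : 1 ≤ j) (hj2 : j < n)
    (hij : i + 2 ≤ j ∨ j + 2 ≤ i) (f : MvPolynomial (Fin n) F) :
    ddiff n j (swapf n i f) = swapf n i (ddiff n j f) := by
  apply ddiff_unique hj1 hj2
  have hspec := congrArg (swapf n i) (ddiff_spec hj1 hj2 f)
  rw [swapf_mul, swapf_sub, swapf_sub, swapf_xv_other hi1 hi2 (by omega) (by omega),
    swapf_xv_other hi1 hi2 (by omega) (by omega)] at hspec
  rw [hspec, swapf_comm_far hi1 hi2 hj1 hj2 hij]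

lemma ddiff_comm_far {i j : ℕ} (hi1 : 1 ≤ i) (hi2 : i < n) (hj1 : 1 ≤ j) (hj2 : j < n)
    (hij : i + 2 ≤ j ∨ j + 2 ≤ i) (f : MvPolynomial (Fin n) F) :
    ddiff n i (ddiff n j f) = ddiff n j (ddiff n i f) := by
  apply ddiff_unique hi1 hi2
  -- need: (xv i - xv (i+1)) * ddiff j (ddiff i f) = ddiff j f - swapf i (ddiff j f)
  have key : ddiff n j ((xv n i - xv n (i+1)) * ddiff n i f)
      = (xv n i - xv n (i+1)) * ddiff n j (ddiff n i f) := by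
    rw [ddiff_mul hj1 hj2, ddiff_sub hj1 hj2,
      ddiff_xv_other hj1 hj2 (by omega) (by omega),
      ddiff_xv_other hj1 hj2 (by omega) (by omega),
      swapf_sub, swapf_xv_other hj1 hj2 (by omega) (by omega),
      swapf_xv_other hj1 hj2 (by omega) (by omega)]
    ring
  rw [← key, ddiff_spec hi1 hi2 f, ddiff_sub hj1 hj2, swapf_ddiff_far hi1 hi2 hj1 hj2 hij]

end Aux4

namespace Aux5
open Aux Aux2 Aux3 Aux4

variable {n : ℕ}

lemma swap_braid_fun {α : Type*} [DecidableEq α] {a b c : α}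
    (hab : a ≠ b) (hbc : b ≠ c) (hac : a ≠ c) :
    (Equiv.swap a b : α → α) ∘ (Equiv.swap b c : α → α) ∘ (Equiv.swap a b) =
    (Equiv.swap b c : α → α) ∘ (Equiv.swap a b : α → α) ∘ (Equiv.swap b c) := by
  funext x
  simp only [Function.comp_apply, Equiv.swap_apply_def]
  split_ifs <;> simp_all

lemma swapf_braid {i : ℕ} (h1 : 1 ≤ i) (h2 : i + 1 < n) (f : MvPolynomial (Fin n) F) :
    swapf n i (swapf n (i+1) (swapf n i f)) = swapf n (i+1) (swapf n i (swapf n (i+1) f)) := by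
  have hi2 : i < n := by omega
  have hj1 : 1 ≤ i + 1 := by omega
  rw [swapf_eq h1 hi2, swapf_eq hj1 h2, swapf_eq h1 hi2, swapf_eq hj1 h2, swapf_eq h1 hi2,
    swapf_eq hj1 h2, rename_rename, rename_rename, rename_rename, rename_rename]
  have e1 : (⟨i+1-1, by omega⟩ : Fin n) = ⟨i, hi2⟩ := by simp
  rw [e1]
  have := swap_braid_fun (a := (⟨i-1, by omega⟩ : Fin n)) (b := ⟨i, hi2⟩) (c := ⟨i+1, h2⟩)
    (by simp only [ne_eq, Fin.mk.injEq]; omega) (by simp only [ne_eq, Fin.mk.injEq]; omega)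
    (by simp only [ne_eq, Fin.mk.injEq]; omega)
  calc rename ((Equiv.swap (⟨i-1, by omega⟩ : Fin n) ⟨i, hi2⟩ : Fin n → Fin n) ∘
        (Equiv.swap (⟨i, hi2⟩ : Fin n) ⟨i+1, h2⟩ : Fin n → Fin n) ∘
        (Equiv.swap (⟨i-1, by omega⟩ : Fin n) ⟨i, hi2⟩)) f
      = rename ((Equiv.swap (⟨i, hi2⟩ : Fin n) ⟨i+1, h2⟩ : Fin n → Fin n) ∘
        (Equiv.swap (⟨i-1, by omega⟩ : Fin n) ⟨i, hi2⟩ : Fin n → Fin n) ∘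
        (Equiv.swap (⟨i, hi2⟩ : Fin n) ⟨i+1, h2⟩)) f := by rw [this]

lemma ddiff_braid {i : ℕ} (h1 : 1 ≤ i) (h2 : i + 1 < n) (f : MvPolynomial (Fin n) F) :
    ddiff n i (ddiff n (i+1) (ddiff n i f)) = ddiff n (i+1) (ddiff n i (ddiff n (i+1) f)) := by
  have hi2 : i < n := by omega
  have hj1 : 1 ≤ i + 1 := by omega
  set di : MvPolynomial (Fin n) F := xv n i - xv n (i+1) with hdi
  set dj : MvPolynomial (Fin n) F := xv n (i+1) - xv n (i+2) with hdj
  set p : MvPolynomial (Fin n) F := xv n i - xv n (i+2) with hp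
  have hrdj : swapf n i dj = p := by
    rw [hdj, swapf_sub, swapf_xv_right h1 hi2, swapf_xv_other h1 hi2 (by omega) (by omega)]
  have hrp : swapf n i p = dj := by
    rw [hp, swapf_sub, swapf_xv_left h1 hi2, swapf_xv_other h1 hi2 (by omega) (by omega)]
  have htdi : swapf n (i+1) di = p := by
    rw [hdi, swapf_sub, swapf_xv_other hj1 h2 (by omega) (by omega), swapf_xv_left hj1 h2]
  have htp : swapf n (i+1) p = di := by
    rw [hp, swapf_sub, swapf_xv_other hj1 h2 (by omega) (by omega), swapf_xv_right hj1 h2]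
  -- part 1 : the triple product for the (i, i+1, i) side
  have main : ∀ g : MvPolynomial (Fin n) F,
      dj * p * (di * ddiff n i (ddiff n (i+1) (ddiff n i g)))
        = g - swapf n i g - swapf n (i+1) g + swapf n (i+1) (swapf n i g)
          + swapf n i (swapf n (i+1) g) - swapf n i (swapf n (i+1) (swapf n i g)) := by
    intro g
    set u := ddiff n i g with hu'
    set w := ddiff n (i+1) u with hw'
    have hu : di * u = g - swapf n i g := ddiff_spec h1 hi2 g
    have hw : dj * w = u - swapf n (i+1) u := ddiff_spec hj1 h2 u
    have hA : di * ddiff n i w = w - swapf n i w := ddiff_spec h1 hi2 w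
    have hru : swapf n i u = u := swapf_ddiff_self h1 hi2 g
    have hpu : p * u = g - swapf n i g + dj * u := by
      rw [← hu, hdi, hdj, hp]; ring
    have hptu : p * swapf n (i+1) u
        = swapf n (i+1) g - swapf n (i+1) (swapf n i g) := by
      have e : p * swapf n (i+1) u = swapf n (i+1) (di * u) := by
        rw [swapf_mul, htdi]
      rw [e, hu, swapf_sub]
    have hrpu : swapf n i (p * u) = dj * u := by
      rw [swapf_mul, hrp, hru]
    have hrptu : swapf n i (p * swapf n (i+1) u)
        = swapf n i (swapf n (i+1) g) - swapf n i (swapf n (i+1) (swapf n i g)) := by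
      rw [congrArg (swapf n i) hptu, swapf_sub]
    have t2 : dj * p * swapf n i w = swapf n i (p * (dj * w)) := by
      rw [swapf_mul, swapf_mul, hrp, hrdj]; ring
    calc dj * p * (di * ddiff n i w)
        = p * (dj * w) - dj * p * swapf n i w := by rw [hA]; ring
      _ = p * (dj * w) - swapf n i (p * (dj * w)) := by rw [t2]
      _ = (p * u - p * swapf n (i+1) u)
          - swapf n i (p * u - p * swapf n (i+1) u) := by rw [hw]; ring_nf
      _ = p * u - p * swapf n (i+1) u
          - swapf n i (p * u) + swapf n i (p * swapf n (i+1) u) := by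
            rw [swapf_sub]; ring
      _ = _ := by rw [hrpu, hrptu, hpu, hptu]; ring
  -- part 2 : the triple product for the (i+1, i, i+1) side
  have main2 : ∀ g : MvPolynomial (Fin n) F,
      di * p * (dj * ddiff n (i+1) (ddiff n i (ddiff n (i+1) g)))
        = g - swapf n (i+1) g - swapf n i g + swapf n i (swapf n (i+1) g)
          + swapf n (i+1) (swapf n i g) - swapf n (i+1) (swapf n i (swapf n (i+1) g)) := by
    intro g
    set u := ddiff n (i+1) g with hu'
    set w := ddiff n i u with hw'
    have hu : dj * u = g - swapf n (i+1) g := ddiff_spec hj1 h2 g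
    have hw : di * w = u - swapf n i u := ddiff_spec h1 hi2 u
    have hA : dj * ddiff n (i+1) w = w - swapf n (i+1) w := ddiff_spec hj1 h2 w
    have hru : swapf n (i+1) u = u := swapf_ddiff_self hj1 h2 g
    have hpu : p * u = g - swapf n (i+1) g + di * u := by
      rw [← hu, hdi, hdj, hp]; ring
    have hptu : p * swapf n i u
        = swapf n i g - swapf n i (swapf n (i+1) g) := by
      have e : p * swapf n i u = swapf n i (dj * u) := by
        rw [swapf_mul, hrdj]
      rw [e, hu, swapf_sub]
    have hrpu : swapf n (i+1) (p * u) = di * u := by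
      rw [swapf_mul, htp, hru]
    have hrptu : swapf n (i+1) (p * swapf n i u)
        = swapf n (i+1) (swapf n i g) - swapf n (i+1) (swapf n i (swapf n (i+1) g)) := by
      rw [congrArg (swapf n (i+1)) hptu, swapf_sub]
    have t2 : di * p * swapf n (i+1) w = swapf n (i+1) (p * (di * w)) := by
      rw [swapf_mul, swapf_mul, htp, htdi]; ring
    calc di * p * (dj * ddiff n (i+1) w)
        = p * (di * w) - di * p * swapf n (i+1) w := by rw [hA]; ring
      _ = p * (di * w) - swapf n (i+1) (p * (di * w)) := by rw [t2]
      _ = (p * u - p * swapf n i u)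
          - swapf n (i+1) (p * u - p * swapf n i u) := by rw [hw]; ring_nf
      _ = p * u - p * swapf n i u
          - swapf n (i+1) (p * u) + swapf n (i+1) (p * swapf n i u) := by
            rw [swapf_sub]; ring
      _ = _ := by rw [hrpu, hrptu, hpu, hptu]; ring
  have hne : dj * p * di ≠ 0 :=
    mul_ne_zero (mul_ne_zero (xv_sub_ne2 hj1 (by omega) (by omega))
      (xv_sub_ne2 h1 (by omega) (by omega))) (xv_sub_ne2 h1 (by omega) (by omega))
  apply mul_left_cancel₀ hne
  have hb := swapf_braid h1 h2 f
  calc dj * p * di * ddiff n i (ddiff n (i+1) (ddiff n i f))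
      = dj * p * (di * ddiff n i (ddiff n (i+1) (ddiff n i f))) := by ring
    _ = f - swapf n i f - swapf n (i+1) f + swapf n (i+1) (swapf n i f)
        + swapf n i (swapf n (i+1) f) - swapf n i (swapf n (i+1) (swapf n i f)) := main f
    _ = f - swapf n (i+1) f - swapf n i f + swapf n i (swapf n (i+1) f)
        + swapf n (i+1) (swapf n i f) - swapf n (i+1) (swapf n i (swapf n (i+1) f)) := by
          rw [hb]; ring
    _ = di * p * (dj * ddiff n (i+1) (ddiff n i (ddiff n (i+1) f))) := (main2 f).symm
    _ = dj * p * di * ddiff n (i+1) (ddiff n i (ddiff n (i+1) f)) := by ring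

end Aux5

namespace Aux6
open Aux Aux2 Aux3 Aux4 Aux5

variable {n : ℕ}

lemma hv : (v : F) ≠ 0 := RatFunc.X_ne_zero

lemma hCvv : (C v⁻¹ * C v : MvPolynomial (Fin n) F) = 1 := by
  rw [← C_mul, inv_mul_cancel₀ hv, C_1]

lemma nabla_sq {i : ℕ} (h1 : 1 ≤ i) (h2 : i < n) (f : MvPolynomial (Fin n) F) :
    nabla n i (nabla n i f) = -(v + v⁻¹) • nabla n i f := by
  unfold nabla
  rw [ddiff_mul h1 h2, ddiff_ddiff h1 h2, ddiff_sub h1 h2, ddiff_Cmul h1 h2, ddiff_Cmul h1 h2,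
    ddiff_xv_succ h1 h2, ddiff_xv_self h1 h2, smul_eq_C_mul, map_neg, map_add]
  ring

lemma nabla_comm_far {i j : ℕ} (hi1 : 1 ≤ i) (hi2 : i < n) (hj1 : 1 ≤ j) (hj2 : j < n)
    (hij : i + 2 ≤ j ∨ j + 2 ≤ i) (f : MvPolynomial (Fin n) F) :
    nabla n i (nabla n j f) = nabla n j (nabla n i f) := by
  unfold nabla
  rw [ddiff_mul hi1 hi2, ddiff_mul hj1 hj2,
    ddiff_sub hi1 hi2, ddiff_Cmul hi1 hi2, ddiff_Cmul hi1 hi2,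
    ddiff_xv_other hi1 hi2 (by omega) (by omega), ddiff_xv_other hi1 hi2 (by omega) (by omega),
    ddiff_sub hj1 hj2, ddiff_Cmul hj1 hj2, ddiff_Cmul hj1 hj2,
    ddiff_xv_other hj1 hj2 (by omega) (by omega), ddiff_xv_other hj1 hj2 (by omega) (by omega),
    swapf_sub, swapf_mul, swapf_mul, swapf_C, swapf_C,
    swapf_xv_other hi1 hi2 (by omega) (by omega), swapf_xv_other hi1 hi2 (by omega) (by omega),
    swapf_sub, swapf_mul, swapf_mul, swapf_C, swapf_C,
    swapf_xv_other hj1 hj2 (by omega) (by omega), swapf_xv_other hj1 hj2 (by omega) (by omega),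
    ddiff_comm_far hi1 hi2 hj1 hj2 hij]
  ring

lemma nabla_expand1 {i : ℕ} (h1 : 1 ≤ i) (h2 : i + 1 < n) (f : MvPolynomial (Fin n) F) :
    nabla n i (nabla n (i+1) (nabla n i f)) = nabla n i f +
      (C v * xv n (i+1) - C v⁻¹ * xv n i) * (C v * xv n (i+2) - C v⁻¹ * xv n i)
        * (C v * xv n (i+2) - C v⁻¹ * xv n (i+1))
        * ddiff n i (ddiff n (i+1) (ddiff n i f)) := by
  have hi2 : i < n := by omega
  have hj1 : 1 ≤ i + 1 := by omega
  set ci : MvPolynomial (Fin n) F := C v * xv n (i+1) - C v⁻¹ * xv n i with hci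
  set cj : MvPolynomial (Fin n) F := C v * xv n (i+2) - C v⁻¹ * xv n (i+1) with hcj
  set e : MvPolynomial (Fin n) F := C v * xv n (i+2) - C v⁻¹ * xv n i with he
  set u : MvPolynomial (Fin n) F := ddiff n i f with hu
  set w : MvPolynomial (Fin n) F := ddiff n (i+1) u with hw
  set A : MvPolynomial (Fin n) F := ddiff n i w with hA
  have du : ddiff n i u = 0 := ddiff_ddiff h1 hi2 f
  have h_inner : ddiff n (i+1) (ci * u) = C v * u + e * w := by
    rw [ddiff_mul hj1 h2, hci, ddiff_sub hj1 h2, ddiff_Cmul hj1 h2, ddiff_Cmul hj1 h2,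
      ddiff_xv_self hj1 h2, ddiff_xv_other hj1 h2 (by omega) (by omega),
      swapf_sub, swapf_mul, swapf_mul, swapf_C, swapf_C,
      swapf_xv_left hj1 h2, swapf_xv_other hj1 h2 (by omega) (by omega)]
    simp only [show i + 1 + 1 = i + 2 from rfl, ← he, ← hw]
    ring
  have h_outer : ddiff n i (cj * (C v * u + e * w)) = u + e * (cj * A) := by
    have dcj : ddiff n i cj = C v⁻¹ := by
      rw [hcj, ddiff_sub h1 hi2, ddiff_Cmul h1 hi2, ddiff_Cmul h1 hi2,
        ddiff_xv_other h1 hi2 (by omega) (by omega), ddiff_xv_succ h1 hi2]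
      ring
    have scj : swapf n i cj = e := by
      rw [hcj, swapf_sub, swapf_mul, swapf_mul, swapf_C, swapf_C,
        swapf_xv_other h1 hi2 (by omega) (by omega), swapf_xv_right h1 hi2, ← he]
    have de : ddiff n i e = -(C v⁻¹) := by
      rw [he, ddiff_sub h1 hi2, ddiff_Cmul h1 hi2, ddiff_Cmul h1 hi2,
        ddiff_xv_other h1 hi2 (by omega) (by omega), ddiff_xv_self h1 hi2]
      ring
    have se : swapf n i e = cj := by
      rw [he, swapf_sub, swapf_mul, swapf_mul, swapf_C, swapf_C,
        swapf_xv_other h1 hi2 (by omega) (by omega), swapf_xv_left h1 hi2, ← hcj]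
    rw [ddiff_mul h1 hi2, dcj, scj, ddiff_add h1 hi2, ddiff_Cmul h1 hi2, du,
      ddiff_mul h1 hi2, de, se, ← hA]
    linear_combination u * (hCvv (n := n))
  show ci * ddiff n i (cj * ddiff n (i+1) (ci * u)) = ci * u + ci * e * cj * A
  rw [h_inner, h_outer]
  ring

lemma nabla_expand2 {i : ℕ} (h1 : 1 ≤ i) (h2 : i + 1 < n) (f : MvPolynomial (Fin n) F) :
    nabla n (i+1) (nabla n i (nabla n (i+1) f)) = nabla n (i+1) f +
      (C v * xv n (i+2) - C v⁻¹ * xv n (i+1)) * (C v * xv n (i+2) - C v⁻¹ * xv n i)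
        * (C v * xv n (i+1) - C v⁻¹ * xv n i)
        * ddiff n (i+1) (ddiff n i (ddiff n (i+1) f)) := by
  have hi2 : i < n := by omega
  have hj1 : 1 ≤ i + 1 := by omega
  set ci : MvPolynomial (Fin n) F := C v * xv n (i+1) - C v⁻¹ * xv n i with hci
  set cj : MvPolynomial (Fin n) F := C v * xv n (i+2) - C v⁻¹ * xv n (i+1) with hcj
  set e : MvPolynomial (Fin n) F := C v * xv n (i+2) - C v⁻¹ * xv n i with he
  set u : MvPolynomial (Fin n) F := ddiff n (i+1) f with hu
  set w : MvPolynomial (Fin n) F := ddiff n i u with hw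
  set B : MvPolynomial (Fin n) F := ddiff n (i+1) w with hB
  have du : ddiff n (i+1) u = 0 := ddiff_ddiff hj1 h2 f
  have h_inner : ddiff n i (cj * u) = C v⁻¹ * u + e * w := by
    rw [ddiff_mul h1 hi2, hcj, ddiff_sub h1 hi2, ddiff_Cmul h1 hi2, ddiff_Cmul h1 hi2,
      ddiff_xv_other h1 hi2 (by omega) (by omega), ddiff_xv_succ h1 hi2,
      swapf_sub, swapf_mul, swapf_mul, swapf_C, swapf_C,
      swapf_xv_other h1 hi2 (by omega) (by omega), swapf_xv_right h1 hi2]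
    rw [← he, ← hw]
    ring
  have h_outer : ddiff n (i+1) (ci * (C v⁻¹ * u + e * w)) = u + e * (ci * B) := by
    have dci : ddiff n (i+1) ci = C v := by
      rw [hci, ddiff_sub hj1 h2, ddiff_Cmul hj1 h2, ddiff_Cmul hj1 h2,
        ddiff_xv_self hj1 h2, ddiff_xv_other hj1 h2 (by omega) (by omega)]
      ring
    have sci : swapf n (i+1) ci = e := by
      rw [hci, swapf_sub, swapf_mul, swapf_mul, swapf_C, swapf_C,
        swapf_xv_left hj1 h2, swapf_xv_other hj1 h2 (by omega) (by omega)]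
      all_goals simp only [show i + 1 + 1 = i + 2 from rfl, ← he]
    have de : ddiff n (i+1) e = -(C v) := by
      rw [he, ddiff_sub hj1 h2, ddiff_Cmul hj1 h2, ddiff_Cmul hj1 h2,
        ddiff_xv_succ hj1 h2, ddiff_xv_other hj1 h2 (by omega) (by omega)]
      ring
    have se : swapf n (i+1) e = ci := by
      rw [he, swapf_sub, swapf_mul, swapf_mul, swapf_C, swapf_C,
        swapf_xv_right hj1 h2, swapf_xv_other hj1 h2 (by omega) (by omega), ← hci]
    rw [ddiff_mul hj1 h2, dci, sci, ddiff_add hj1 h2, ddiff_Cmul hj1 h2, du,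
      ddiff_mul hj1 h2, de, se, ← hB]
    linear_combination u * (hCvv (n := n))
  show (C v * xv n (i+1+1) - C v⁻¹ * xv n (i+1)) *
      ddiff n (i+1) (ci * ddiff n i ((C v * xv n (i+1+1) - C v⁻¹ * xv n (i+1)) * u))
      = (C v * xv n (i+1+1) - C v⁻¹ * xv n (i+1)) * u + cj * e * ci * B
  simp only [show i + 1 + 1 = i + 2 from rfl, ← hcj]
  rw [h_inner, h_outer]
  ring

lemma nabla_braid_diff {i : ℕ} (h1 : 1 ≤ i) (h2 : i + 1 < n) (f : MvPolynomial (Fin n) F) :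
    nabla n i (nabla n (i+1) (nabla n i f)) - nabla n (i+1) (nabla n i (nabla n (i+1) f))
      = nabla n i f - nabla n (i+1) f := by
  rw [nabla_expand1 h1 h2, nabla_expand2 h1 h2, ddiff_braid h1 h2]
  ring

end Aux6



/-- T_i = ∇_i + v. -/
def Tnab (n i : ℕ) (f : MvPolynomial (Fin n) F) : MvPolynomial (Fin n) F :=
  nabla n i f + v • f

namespace Aux7
open Aux Aux2 Aux3 Aux4 Aux5 Aux6

variable {n : ℕ}

lemma nabla_add {i : ℕ} (h1 : 1 ≤ i) (h2 : i < n) (f g : MvPolynomial (Fin n) F) :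
    nabla n i (f + g) = nabla n i f + nabla n i g := by
  unfold nabla; rw [ddiff_add h1 h2]; ring

lemma nabla_smul {i : ℕ} (h1 : 1 ≤ i) (h2 : i < n) (c : F) (f : MvPolynomial (Fin n) F) :
    nabla n i (c • f) = c • nabla n i f := by
  unfold nabla; rw [smul_eq_C_mul, smul_eq_C_mul, ddiff_Cmul h1 h2]; ring

lemma nabla_Cmul {i : ℕ} (h1 : 1 ≤ i) (h2 : i < n) (c : F) (f : MvPolynomial (Fin n) F) :
    nabla n i (C c * f) = C c * nabla n i f := by
  unfold nabla; rw [ddiff_Cmul h1 h2]; ring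

lemma T_quad {i : ℕ} (h1 : 1 ≤ i) (h2 : i < n) (f : MvPolynomial (Fin n) F) :
    Tnab n i (Tnab n i f) - (v - v⁻¹) • Tnab n i f - f = 0 := by
  unfold Tnab
  rw [nabla_add h1 h2, nabla_smul h1 h2, nabla_sq h1 h2]
  simp only [smul_eq_C_mul, map_neg, map_add, map_sub]
  linear_combination f * (hCvv (n := n))

lemma T_braid {i : ℕ} (h1 : 1 ≤ i) (h2 : i + 1 < n) (f : MvPolynomial (Fin n) F) :
    Tnab n i (Tnab n (i+1) (Tnab n i f)) = Tnab n (i+1) (Tnab n i (Tnab n (i+1) f)) := by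
  have hi2 : i < n := by omega
  have hj1 : 1 ≤ i + 1 := by omega
  have hsqi : nabla n i (nabla n i f) = -((C v + C v⁻¹) * nabla n i f) := by
    rw [nabla_sq h1 hi2, smul_eq_C_mul, map_neg, map_add, neg_mul]
  have hsqj : nabla n (i+1) (nabla n (i+1) f) = -((C v + C v⁻¹) * nabla n (i+1) f) := by
    rw [nabla_sq hj1 h2, smul_eq_C_mul, map_neg, map_add, neg_mul]
  have hbr := nabla_braid_diff h1 h2 f
  unfold Tnab
  simp only [smul_eq_C_mul, nabla_add h1 hi2, nabla_Cmul h1 hi2, nabla_add hj1 h2,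
    nabla_Cmul hj1 h2, mul_add]
  linear_combination hbr + C v * hsqi - C v * hsqj
    - (nabla n i f - nabla n (i+1) f) * (hCvv (n := n))

lemma T_comm_far {i j : ℕ} (hi1 : 1 ≤ i) (hi2 : i < n) (hj1 : 1 ≤ j) (hj2 : j < n)
    (hij : i + 2 ≤ j ∨ j + 2 ≤ i) (f : MvPolynomial (Fin n) F) :
    Tnab n i (Tnab n j f) = Tnab n j (Tnab n i f) := by
  unfold Tnab
  simp only [smul_eq_C_mul, nabla_add hi1 hi2, nabla_Cmul hi1 hi2, nabla_add hj1 hj2,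
    nabla_Cmul hj1 hj2, mul_add]
  rw [nabla_comm_far hi1 hi2 hj1 hj2 hij]
  ring

end Aux7


/-- The operators ∇_i on ℚ(v)[x_1,…,x_n] satisfy
∇_i² = −(v+v⁻¹)∇_i, commutation for |i−j| ≥ 2, and
∇_i∇_(i+1)∇_i − ∇_(i+1)∇_i∇_(i+1) = ∇_i − ∇_(i+1); equivalently T_i := ∇_i + v
satisfy the Hecke algebra relations. -/
theorem nabla_relations (n : ℕ) :
    (∀ i : ℕ, 1 ≤ i → i < n → ∀ f : MvPolynomial (Fin n) F,
      nabla n i (nabla n i f) = -(v + v⁻¹) • nabla n i f) ∧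
    (∀ i j : ℕ, 1 ≤ i → i < n → 1 ≤ j → j < n → (i + 2 ≤ j ∨ j + 2 ≤ i) →
      ∀ f : MvPolynomial (Fin n) F, nabla n i (nabla n j f) = nabla n j (nabla n i f)) ∧
    (∀ i : ℕ, 1 ≤ i → i + 1 < n → ∀ f : MvPolynomial (Fin n) F,
      nabla n i (nabla n (i + 1) (nabla n i f)) -
        nabla n (i + 1) (nabla n i (nabla n (i + 1) f)) =
          nabla n i f - nabla n (i + 1) f) ∧
    (∀ i : ℕ, 1 ≤ i → i < n → ∀ f : MvPolynomial (Fin n) F,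
      Tnab n i (Tnab n i f) - (v - v⁻¹) • Tnab n i f - f = 0) ∧
    (∀ i : ℕ, 1 ≤ i → i + 1 < n → ∀ f : MvPolynomial (Fin n) F,
      Tnab n i (Tnab n (i + 1) (Tnab n i f)) = Tnab n (i + 1) (Tnab n i (Tnab n (i + 1) f))) ∧
    (∀ i j : ℕ, 1 ≤ i → i < n → 1 ≤ j → j < n → (i + 2 ≤ j ∨ j + 2 ≤ i) →
      ∀ f : MvPolynomial (Fin n) F, Tnab n i (Tnab n j f) = Tnab n j (Tnab n i f)) := by
  exact ⟨fun _ h1 h2 f => Aux6.nabla_sq h1 h2 f,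
   fun _ _ hi1 hi2 hj1 hj2 hij f => Aux6.nabla_comm_far hi1 hi2 hj1 hj2 hij f,
   fun _ h1 h2 f => Aux6.nabla_braid_diff h1 h2 f,
   fun _ h1 h2 f => Aux7.T_quad h1 h2 f,
   fun _ h1 h2 f => Aux7.T_braid h1 h2 f,
   fun _ _ hi1 hi2 hj1 hj2 hij f => Aux7.T_comm_far hi1 hi2 hj1 hj2 hij f⟩

end
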